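/- arXiv:2404.08839 — 4 statements merged into one kernel-verified Lean document; each statement's English description precedes it below -/
import Mathlib

section
/- (Double robustness, case 1: correct regression) Suppose g(X) equals the true regression function γ(X) = E_{P⁰}[Y|X], and a : 𝒳 → ℝ is any function with E_{P⁰}[a(X)²] < ∞. Assume E_{P⁰}[Y²] < ∞, P¹_X ≪ P⁰_X, and E_{P⁰}[(dP¹_X/dP⁰_X)²] < ∞. Then E_{P¹}[g(X)] + E_{P⁰}[a(X)·(Y − g(X))] = θ, where θ = ∫∫ y dP⁰_{Y|X}(y|x) dP¹_X(x). -/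
open MeasureTheory ProbabilityTheory
open scoped ENNReal NNReal

/-- ENNReal Jensen: on a probability measure, `(∫⁻ f)² ≤ ∫⁻ f²`. -/
lemma sq_lintegral_le {α : Type*} [MeasurableSpace α] (μ : Measure α)
    [IsProbabilityMeasure μ] {f : α → ℝ≥0∞} (hf : AEMeasurable f μ) :
    (∫⁻ x, f x ∂μ) ^ (2 : ℝ) ≤ ∫⁻ x, f x ^ (2 : ℝ) ∂μ := by
  have hconj : Real.HolderConjugate 2 2 := Real.HolderConjugate.two_two
  have h := ENNReal.lintegral_mul_le_Lp_mul_Lq μ hconj hf aemeasurable_const (g := fun _ => 1)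
  simp only [mul_one, ENNReal.one_rpow, lintegral_const, measure_univ, one_mul,
    ENNReal.one_rpow, ENNReal.rpow_one] at h
  calc (∫⁻ x, f x ∂μ) ^ (2 : ℝ)
      ≤ ((∫⁻ x, f x ^ (2:ℝ) ∂μ) ^ (1/2 : ℝ)) ^ (2 : ℝ) := by
        simp only [Pi.mul_apply, mul_one] at h
        exact ENNReal.rpow_le_rpow h (by norm_num)
    _ = ∫⁻ x, f x ^ (2:ℝ) ∂μ := by
        rw [← ENNReal.rpow_mul]; norm_num

lemma memLp_two_lintegral_sq_lt_top {α : Type*} [MeasurableSpace α] {μ : Measure α}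
    {f : α → ℝ} (hf : MemLp f 2 μ) :
    ∫⁻ x, (‖f x‖₊ : ℝ≥0∞) ^ (2 : ℝ) ∂μ < ⊤ := by
  have h := hf.2
  rw [eLpNorm_eq_lintegral_rpow_enorm_toReal (by norm_num) (by norm_num)] at h
  simp only [ENNReal.toReal_ofNat] at h
  exact (ENNReal.rpow_lt_top_iff_of_pos (by norm_num)).mp h

/-- Double robustness, case 1: correct regression: with
g(x) = γ(x) = E_{P⁰}[Y|X=x] (realized via the disintegration kernel of P⁰) and
any square-integrable weight function a,
E_{P¹}[g(X)] + E_{P⁰}[a(X)(Y − g(X))] = θ. -/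
theorem doubly_robust_correct_regression
    {𝓧 : Type*} [MeasurableSpace 𝓧]
    (P0 P1 : Measure (𝓧 × ℝ)) [IsProbabilityMeasure P0] [IsProbabilityMeasure P1]
    (hac : P1.fst ≪ P0.fst)
    (hY : MemLp (fun p : 𝓧 × ℝ => p.2) 2 P0)
    (hα : MemLp (fun x => (P1.fst.rnDeriv P0.fst x).toReal) 2 P0.fst)
    (a : 𝓧 → ℝ) (ham : Measurable a) (ha : MemLp a 2 P0.fst) :
    (∫ x, (∫ y, y ∂(P0.condKernel x)) ∂P1.fst)
      + ∫ p, a p.1 * (p.2 - ∫ y, y ∂(P0.condKernel p.1)) ∂P0 =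
      ∫ p, p.2 ∂(P1.fst.compProd P0.condKernel) := by
  have hdis : P0.fst ⊗ₘ P0.condKernel = P0 := P0.disintegrate _
  set κ := P0.condKernel with hκ
  set γ : 𝓧 → ℝ := fun x => ∫ y, y ∂(κ x) with hγ
  have hγm : StronglyMeasurable γ :=
    (measurable_snd (α := 𝓧) (β := ℝ)).stronglyMeasurable.integral_kernel_prod_right'
  have hmpfst : MeasurePreserving (Prod.fst : 𝓧 × ℝ → 𝓧) P0 P0.fst :=
    ⟨measurable_fst, rfl⟩
  -- square integrability of snd, in lintegral form
  have hYsq : ∫⁻ p, (‖p.2‖₊ : ℝ≥0∞) ^ (2:ℝ) ∂P0 < ⊤ := memLp_two_lintegral_sq_lt_top hY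
  -- G x = ∫⁻ |y| dκ x
  set G : 𝓧 → ℝ≥0∞ := fun x => ∫⁻ y, (‖y‖₊ : ℝ≥0∞) ∂(κ x) with hG
  have hGm : Measurable G :=
    (measurable_snd (α := 𝓧) (β := ℝ)).enorm.lintegral_kernel_prod_right'
  have hG2m : Measurable fun x => ∫⁻ y, (‖y‖₊ : ℝ≥0∞) ^ (2:ℝ) ∂(κ x) :=
    ((measurable_snd (α := 𝓧) (β := ℝ)).enorm.pow_const _).lintegral_kernel_prod_right'
  -- ∫⁻ G² ≤ ∫⁻ snd² dP0 < ∞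
  have hGsq : ∫⁻ x, G x ^ (2:ℝ) ∂P0.fst < ⊤ := by
    calc ∫⁻ x, G x ^ (2:ℝ) ∂P0.fst
        ≤ ∫⁻ x, ∫⁻ y, (‖y‖₊ : ℝ≥0∞) ^ (2:ℝ) ∂(κ x) ∂P0.fst := by
          refine lintegral_mono fun x => ?_
          exact sq_lintegral_le (κ x) measurable_id.enorm.aemeasurable
      _ = ∫⁻ p, (‖p.2‖₊ : ℝ≥0∞) ^ (2:ℝ) ∂P0 := by
          conv_rhs => rw [← hdis]
          rw [Measure.lintegral_compProd (f := fun p : 𝓧 × ℝ => (‖p.2‖₊ : ℝ≥0∞) ^ (2:ℝ)) ((measurable_snd.enorm.pow_const _))]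
      _ < ⊤ := hYsq
  -- ∫⁻ rnDeriv² < ∞
  have hrnm : Measurable (P1.fst.rnDeriv P0.fst) := Measure.measurable_rnDeriv _ _
  have hrnsq : ∫⁻ x, P1.fst.rnDeriv P0.fst x ^ (2:ℝ) ∂P0.fst < ⊤ := by
    have hfin := Measure.rnDeriv_lt_top P1.fst P0.fst
    have hcongr : ∀ᵐ x ∂P0.fst, P1.fst.rnDeriv P0.fst x ^ (2:ℝ)
        = (‖(P1.fst.rnDeriv P0.fst x).toReal‖₊ : ℝ≥0∞) ^ (2:ℝ) := by
      filter_upwards [hfin] with x hx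
      congr 1
      rw [← enorm_eq_nnnorm, Real.enorm_eq_ofReal ENNReal.toReal_nonneg, ENNReal.ofReal_toReal hx.ne]
    rw [lintegral_congr_ae hcongr]
    exact memLp_two_lintegral_sq_lt_top hα
  -- integrability of snd w.r.t. P1.fst ⊗ₘ κ
  have hint1 : Integrable (fun p : 𝓧 × ℝ => p.2) (P1.fst ⊗ₘ κ) := by
    refine ⟨measurable_snd.aestronglyMeasurable, ?_⟩
    show (∫⁻ p : 𝓧 × ℝ, (‖p.2‖₊ : ℝ≥0∞) ∂(P1.fst ⊗ₘ κ)) < ⊤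
    rw [Measure.lintegral_compProd (f := fun p : 𝓧 × ℝ => (‖p.2‖₊ : ℝ≥0∞)) measurable_snd.enorm]
    rw [← lintegral_rnDeriv_mul hac hGm.aemeasurable]
    have hconj : Real.HolderConjugate 2 2 := Real.HolderConjugate.two_two
    calc ∫⁻ x, P1.fst.rnDeriv P0.fst x * G x ∂P0.fst
        ≤ (∫⁻ x, P1.fst.rnDeriv P0.fst x ^ (2:ℝ) ∂P0.fst) ^ (1/2:ℝ)
          * (∫⁻ x, G x ^ (2:ℝ) ∂P0.fst) ^ (1/2:ℝ) :=
          ENNReal.lintegral_mul_le_Lp_mul_Lq _ hconj hrnm.aemeasurable hGm.aemeasurable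
      _ < ⊤ := ENNReal.mul_lt_top
          (ENNReal.rpow_lt_top_of_nonneg (by norm_num) hrnsq.ne)
          (ENNReal.rpow_lt_top_of_nonneg (by norm_num) hGsq.ne)
  -- Part 1: RHS = ∫ γ dP1.fst
  have hpart1 : ∫ p, p.2 ∂(P1.fst ⊗ₘ κ) = ∫ x, γ x ∂P1.fst :=
    Measure.integral_compProd hint1
  -- a∘fst ∈ L²(P0)
  have haP0 : MemLp (fun p : 𝓧 × ℝ => a p.1) 2 P0 :=
    ha.comp_measurePreserving hmpfst
  -- I1 : a(x) y integrable
  have I1 : Integrable (fun p : 𝓧 × ℝ => a p.1 * p.2) P0 := by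
    have := hY.smul haP0 (p := 2) (q := 2) (r := 1)
    rw [memLp_one_iff_integrable] at this
    exact this
  have I1' : Integrable (fun p : 𝓧 × ℝ => a p.1 * p.2) (P0.fst ⊗ₘ κ) := by
    rwa [hdis]
  -- I2 : a(x) γ(x) integrable
  have hI1c := (Measure.integrable_compProd_iff
      (f := fun p : 𝓧 × ℝ => a p.1 * p.2)
      ((ham.comp measurable_fst).mul measurable_snd).aestronglyMeasurable).mp I1'
  have I2fst : Integrable (fun x => a x * γ x) P0.fst := by
    refine hI1c.2.mono (ham.stronglyMeasurable.mul hγm).aestronglyMeasurable ?_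
    refine Filter.Eventually.of_forall fun x => ?_
    have h1 : ‖a x * γ x‖ ≤ ‖a x‖ * ∫ y, ‖y‖ ∂(κ x) := by
      rw [norm_mul]
      exact mul_le_mul_of_nonneg_left (norm_integral_le_integral_norm _) (norm_nonneg _)
    have h2 : ∫ y, ‖a x * y‖ ∂(κ x) = ‖a x‖ * ∫ y, ‖y‖ ∂(κ x) := by
      simp_rw [norm_mul]
      exact integral_const_mul _ _
    calc ‖a x * γ x‖ ≤ ‖a x‖ * ∫ y, ‖y‖ ∂(κ x) := h1
      _ = ∫ y, ‖a x * y‖ ∂(κ x) := h2.symm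
      _ ≤ ‖∫ y, ‖a x * y‖ ∂(κ x)‖ := le_abs_self _
  have I2 : Integrable (fun p : 𝓧 × ℝ => a p.1 * γ p.1) P0 :=
    (hmpfst.integrable_comp (ham.stronglyMeasurable.mul hγm).aestronglyMeasurable).mpr I2fst
  -- integrand of second term integrable
  have hf2 : Integrable (fun p : 𝓧 × ℝ => a p.1 * (p.2 - γ p.1)) P0 := by
    simp_rw [mul_sub]; exact I1.sub I2
  have hf2' : Integrable (fun p : 𝓧 × ℝ => a p.1 * (p.2 - γ p.1)) (P0.fst ⊗ₘ κ) := by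
    rwa [hdis]
  -- ae section integrability of snd under κ
  have hYint : Integrable (fun p : 𝓧 × ℝ => p.2) (P0.fst ⊗ₘ κ) := by
    rw [hdis]; exact hY.integrable one_le_two
  have hsec : ∀ᵐ x ∂P0.fst, Integrable (fun y : ℝ => y) (κ x) :=
    ((Measure.integrable_compProd_iff measurable_snd.aestronglyMeasurable).mp hYint).1
  -- Part 2: the correction term vanishes
  have hpart2 : ∫ p, a p.1 * (p.2 - γ p.1) ∂P0 = 0 := by
    conv_lhs => rw [← hdis]
    rw [Measure.integral_compProd hf2']
    refine integral_eq_zero_of_ae ?_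
    filter_upwards [hsec] with x hx
    have : IsProbabilityMeasure (κ x) := inferInstance
    show ∫ b, a x * (b - γ x) ∂κ x = 0
    rw [integral_const_mul]
    rw [integral_sub hx (integrable_const _)]
    simp [hγ]
  rw [Measure.compProd] at hpart1 ⊢
  rw [hpart1, hpart2, add_zero]
end

section
/- (Multiply-robust identification, K = 2, regression–weight configuration) Let P⁰, P¹ be joint laws of (X₁, X₂, Y). Define θ = ∫∫∫ h(y) dP⁰_{Y|X₁,X₂}(y|x₁,x₂) dP¹_{X₂|X₁}(x₂|x₁) dP⁰_{X₁}(x₁). Suppose g₂(x₁,x₂) is any square-integrable function, a₂(x₁,x₂) = α₂(x₁,x₂) := dP¹_{X₂|X₁}/dP⁰_{X₂|X₁}(x₂|x₁) is the true conditional Radon–Nikodym derivative, g₁(x₁) = γ₁(x₁) := E_{P¹}[g₂(X₁,X₂)|X₁ = x₁] is the correct nested regression of g₂, and a₁ is any square-integrable function. Then E_{P⁰}[g₁(X₁)] + E_{P¹}[a₁(X₁)(g₂(X₁,X₂) − g₁(X₁))] + E_{P⁰}[α₂(X₁,X₂)(h(Y) − g₂(X₁,X₂))] = θ, even though g₂ may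 be misspecified. -/
open MeasureTheory ProbabilityTheory

private lemma l2_mul_integrable {α : Type*} [MeasurableSpace α] {μ : Measure α} {f g : α → ℝ}
    (hf : MemLp f 2 μ) (hg : MemLp g 2 μ) : Integrable (fun x => f x * g x) μ := by
  have h1 : (1 : ENNReal) / 1 = 1 / 2 + 1 / 2 := by
    rw [ENNReal.div_add_div_same, one_add_one_eq_two,
      ENNReal.div_self two_ne_zero ENNReal.ofNat_ne_top, div_one]
  exact memLp_one_iff_integrable.mp (hg.smul (r := 1) hf)

/-- Multiply-robust identification, K = 2, regression–weight
configuration: with the second weight a₂ = α₂ the true conditional RN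
derivative and the first regression g₁ = γ₁ the correct nested regression of an
arbitrary square-integrable g₂, the MR estimating equation identifies
θ = ∫∫∫ h(y) dP⁰_{Y|X₁,X₂} dP¹_{X₂|X₁} dP⁰_{X₁}. -/
theorem multiply_robust_K2_mixed
    {𝓧₁ 𝓧₂ : Type*} [MeasurableSpace 𝓧₁]
    [MeasurableSpace 𝓧₂] [StandardBorelSpace 𝓧₂] [Nonempty 𝓧₂]
    (P0 P1 : Measure ((𝓧₁ × 𝓧₂) × ℝ))
    [IsProbabilityMeasure P0] [IsProbabilityMeasure P1]
    (h : ℝ → ℝ) (hh : Measurable h) (hbd : ∃ C, ∀ y, |h y| ≤ C)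
    (g₂ : 𝓧₁ × 𝓧₂ → ℝ) (hg₂m : Measurable g₂)
    (hg₂0 : MemLp g₂ 2 P0.fst) (hg₂1 : MemLp g₂ 2 P1.fst)
    (a₁ : 𝓧₁ → ℝ) (ha₁m : Measurable a₁)
    (ha₁ : MemLp (fun q : 𝓧₁ × 𝓧₂ => a₁ q.1) 2 P1.fst)
    -- the conditional distributions P¹_{X₂|X₁} and P⁰_{X₂|X₁} are mutually a.c.
    (hacK : ∀ᵐ x₁ ∂(P0.fst.fst), P1.fst.condKernel x₁ ≪ P0.fst.condKernel x₁)
    -- square-integrability of the true conditional RN derivative α₂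
    (hα₂ : MemLp (fun q : 𝓧₁ × 𝓧₂ =>
      (Kernel.rnDeriv P1.fst.condKernel P0.fst.condKernel q.1 q.2).toReal) 2 P0.fst) :
    (∫ x₁, (∫ x₂, g₂ (x₁, x₂) ∂(P1.fst.condKernel x₁)) ∂(P0.fst.fst))
      + (∫ q, a₁ q.1 * (g₂ q - ∫ x₂, g₂ (q.1, x₂) ∂(P1.fst.condKernel q.1)) ∂P1.fst)
      + (∫ ω, (Kernel.rnDeriv P1.fst.condKernel P0.fst.condKernel ω.1.1 ω.1.2).toReal
            * (h ω.2 - g₂ ω.1) ∂P0)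
    = ∫ x₁, (∫ x₂, (∫ y, h y ∂(P0.condKernel (x₁, x₂)))
        ∂(P1.fst.condKernel x₁)) ∂(P0.fst.fst) := by
  obtain ⟨C, hC⟩ := hbd
  have hC0 : 0 ≤ C := le_trans (abs_nonneg _) (hC 0)
  set μ0 := P0.fst.fst with hμ0
  set K0 := P0.fst.condKernel with hK0
  set K1 := P1.fst.condKernel with hK1
  set α₂ : 𝓧₁ × 𝓧₂ → ℝ := fun q => (Kernel.rnDeriv K1 K0 q.1 q.2).toReal with hα₂def
  set Eh : 𝓧₁ × 𝓧₂ → ℝ := fun q => ∫ y, h y ∂(P0.condKernel q) with hEhdef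
  -- measurability facts
  have hα₂m : Measurable α₂ := (Kernel.measurable_rnDeriv K1 K0).ennreal_toReal
  have hEhm : StronglyMeasurable Eh := by
    have hsm : StronglyMeasurable (fun p : (𝓧₁ × 𝓧₂) × ℝ => h p.2) :=
      (hh.comp measurable_snd).stronglyMeasurable
    exact hsm.integral_kernel_prod_right' (κ := P0.condKernel)
  have hEhb : ∀ q, |Eh q| ≤ C := by
    intro q
    have := norm_integral_le_of_norm_le_const (μ := P0.condKernel q) (f := h) (C := C)
      (Filter.Eventually.of_forall fun y => by simpa using hC y)
    simpa [Eh] using this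
  have hhint : ∀ (ν : Measure ℝ) [IsProbabilityMeasure ν], Integrable h ν := by
    intro ν _
    exact (integrable_const C).mono' hh.aestronglyMeasurable
      (Filter.Eventually.of_forall fun y => by simpa using hC y)
  -- integrability facts
  have I1 : Integrable (fun q => a₁ q.1 * g₂ q) P1.fst := l2_mul_integrable ha₁ hg₂1
  have I2 : Integrable (fun q => α₂ q * g₂ q) P0.fst := l2_mul_integrable hα₂ hg₂0
  have I3 : Integrable α₂ P0.fst := hα₂.integrable one_le_two
  have I4 : Integrable (fun q => α₂ q * Eh q) P0.fst := by
    have := I3.bdd_mul (f := Eh) (c := C) hEhm.aestronglyMeasurable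
      (Filter.Eventually.of_forall fun q => by simpa using hEhb q)
    simpa [mul_comm] using this
  have I5 : Integrable (fun q => α₂ q * (Eh q - g₂ q)) P0.fst := by
    simpa [mul_sub, Pi.sub_def] using I4.sub I2
  -- integrability of the third integrand over P0
  have hmapfst : Integrable (fun q => α₂ q * g₂ q) (P0.map Prod.fst) := I2
  have hα₂fst : Integrable (fun ω : (𝓧₁ × 𝓧₂) × ℝ => α₂ ω.1) P0 := by
    have h3 : Integrable α₂ (P0.map Prod.fst) := I3
    exact (integrable_map_measure hα₂m.aestronglyMeasurable
      measurable_fst.aemeasurable).mp h3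
  have I6 : Integrable (fun ω : (𝓧₁ × 𝓧₂) × ℝ => α₂ ω.1 * (h ω.2 - g₂ ω.1)) P0 := by
    have ha : Integrable (fun ω : (𝓧₁ × 𝓧₂) × ℝ => α₂ ω.1 * g₂ ω.1) P0 :=
      (integrable_map_measure (hα₂m.mul hg₂m).aestronglyMeasurable
        measurable_fst.aemeasurable).mp hmapfst
    have hb : Integrable (fun ω : (𝓧₁ × 𝓧₂) × ℝ => α₂ ω.1 * h ω.2) P0 := by
      have := hα₂fst.bdd_mul (f := fun ω : (𝓧₁ × 𝓧₂) × ℝ => h ω.2) (c := C)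
        (hh.comp measurable_snd).aestronglyMeasurable
        (Filter.Eventually.of_forall fun ω => by simpa using hC ω.2)
      simpa [mul_comm] using this
    simpa [mul_sub, Pi.sub_def] using hb.sub ha
  -- STEP 1: the middle term vanishes
  have hJint : Integrable (fun x₁ => a₁ x₁ * ∫ x₂, g₂ (x₁, x₂) ∂(K1 x₁)) P1.fst.fst := by
    have := I1.integral_condKernel (ρ := P1.fst)
    simpa [integral_const_mul] using this
  have hBint : Integrable
      (fun q : 𝓧₁ × 𝓧₂ => a₁ q.1 * ∫ x₂, g₂ (q.1, x₂) ∂(K1 q.1)) P1.fst := by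
    have h3 : Integrable (fun x₁ => a₁ x₁ * ∫ x₂, g₂ (x₁, x₂) ∂(K1 x₁))
        (P1.fst.map Prod.fst) := hJint
    exact (integrable_map_measure hJint.aestronglyMeasurable
      measurable_fst.aemeasurable).mp h3
  have hA : ∫ q, a₁ q.1 * g₂ q ∂P1.fst
      = ∫ x₁, a₁ x₁ * ∫ x₂, g₂ (x₁, x₂) ∂(K1 x₁) ∂P1.fst.fst := by
    rw [← Measure.integral_condKernel (ρ := P1.fst) I1]
    simp_rw [integral_const_mul]
    rfl
  have hB : ∫ q, a₁ q.1 * (∫ x₂, g₂ (q.1, x₂) ∂(K1 q.1)) ∂P1.fst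
      = ∫ x₁, a₁ x₁ * ∫ x₂, g₂ (x₁, x₂) ∂(K1 x₁) ∂P1.fst.fst := by
    exact (integral_map measurable_fst.aemeasurable hJint.aestronglyMeasurable).symm
  have ht2 : ∫ q, a₁ q.1 * (g₂ q - ∫ x₂, g₂ (q.1, x₂) ∂(K1 q.1)) ∂P1.fst = 0 := by
    simp_rw [mul_sub]
    rw [integral_sub I1 hBint, hA, hB, sub_self]
  -- STEP 2: the third term
  have ht3a : ∫ ω, (Kernel.rnDeriv K1 K0 ω.1.1 ω.1.2).toReal * (h ω.2 - g₂ ω.1) ∂P0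
      = ∫ q, α₂ q * (Eh q - g₂ q) ∂P0.fst := by
    rw [← Measure.integral_condKernel (ρ := P0) I6]
    refine integral_congr_ae (Filter.Eventually.of_forall fun q => ?_)
    have : IsProbabilityMeasure (P0.condKernel q) := inferInstance
    show (∫ y, α₂ q * (h y - g₂ q) ∂(P0.condKernel q)) = α₂ q * (Eh q - g₂ q)
    rw [integral_const_mul, integral_sub (hhint _) (integrable_const _), integral_const]
    simp [Eh]
  have ht3b : ∫ q, α₂ q * (Eh q - g₂ q) ∂P0.fst
      = ∫ x₁, ∫ x₂, α₂ (x₁, x₂) * (Eh (x₁, x₂) - g₂ (x₁, x₂)) ∂(K0 x₁) ∂μ0 :=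
    (Measure.integral_condKernel (ρ := P0.fst) I5).symm
  -- a.e. identity for the inner integral
  have hsec : ∀ᵐ x₁ ∂μ0, Integrable (fun x₂ => α₂ (x₁, x₂) * g₂ (x₁, x₂)) (K0 x₁) :=
    I2.condKernel_ae
  have key : ∀ᵐ x₁ ∂μ0,
      ∫ x₂, α₂ (x₁, x₂) * (Eh (x₁, x₂) - g₂ (x₁, x₂)) ∂(K0 x₁)
        = (∫ x₂, Eh (x₁, x₂) ∂(K1 x₁)) - ∫ x₂, g₂ (x₁, x₂) ∂(K1 x₁) := by
    filter_upwards [hacK, hsec] with x₁ hac hsecx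
    have hrn : (fun x₂ => Kernel.rnDeriv K1 K0 x₁ x₂)
        =ᵐ[K0 x₁] (K1 x₁).rnDeriv (K0 x₁) := Kernel.rnDeriv_eq_rnDeriv_measure
    have e1 : ∫ x₂, α₂ (x₁, x₂) * (Eh (x₁, x₂) - g₂ (x₁, x₂)) ∂(K0 x₁)
        = ∫ x₂, ((K1 x₁).rnDeriv (K0 x₁) x₂).toReal * (Eh (x₁, x₂) - g₂ (x₁, x₂)) ∂(K0 x₁) := by
      refine integral_congr_ae (hrn.mono fun x₂ hx => ?_)
      simp only [α₂, hx]
    have e2 : ∫ x₂, ((K1 x₁).rnDeriv (K0 x₁) x₂).toReal * (Eh (x₁, x₂) - g₂ (x₁, x₂)) ∂(K0 x₁)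
        = ∫ x₂, (Eh (x₁, x₂) - g₂ (x₁, x₂)) ∂(K1 x₁) := by
      have := integral_rnDeriv_smul (μ := K1 x₁) (ν := K0 x₁) hac
        (f := fun x₂ => Eh (x₁, x₂) - g₂ (x₁, x₂))
      simpa [smul_eq_mul] using this
    have hg₂sec : Integrable (fun x₂ => g₂ (x₁, x₂)) (K1 x₁) := by
      rw [← integrable_rnDeriv_smul_iff (μ := K1 x₁) (ν := K0 x₁) hac]
      refine hsecx.congr (hrn.mono fun x₂ hx => ?_)
      simp only [α₂, hx, smul_eq_mul]
    have hEhsec : Integrable (fun x₂ => Eh (x₁, x₂)) (K1 x₁) := by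
      refine (integrable_const C).mono'
        (hEhm.comp_measurable measurable_prodMk_left).aestronglyMeasurable
        (Filter.Eventually.of_forall fun x₂ => by simpa using hEhb (x₁, x₂))
    rw [e1, e2, integral_sub hEhsec hg₂sec]
  -- outer integrability
  have hGdint : Integrable
      (fun x₁ => ∫ x₂, α₂ (x₁, x₂) * (Eh (x₁, x₂) - g₂ (x₁, x₂)) ∂(K0 x₁)) μ0 :=
    I5.integral_condKernel
  have hGθm : StronglyMeasurable (fun x₁ => ∫ x₂, Eh (x₁, x₂) ∂(K1 x₁)) :=
    hEhm.integral_kernel_prod_right' (κ := K1)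
  have hGθint : Integrable (fun x₁ => ∫ x₂, Eh (x₁, x₂) ∂(K1 x₁)) μ0 := by
    refine (integrable_const C).mono' hGθm.aestronglyMeasurable
      (Filter.Eventually.of_forall fun x₁ => ?_)
    have : IsProbabilityMeasure (K1 x₁) := inferInstance
    have := norm_integral_le_of_norm_le_const (μ := K1 x₁)
      (f := fun x₂ => Eh (x₁, x₂)) (C := C)
      (Filter.Eventually.of_forall fun x₂ => by simpa using hEhb (x₁, x₂))
    simpa using this
  -- STEP 3: the first term
  have ht1 : ∫ x₁, (∫ x₂, g₂ (x₁, x₂) ∂(K1 x₁)) ∂μ0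
      = (∫ x₁, ∫ x₂, Eh (x₁, x₂) ∂(K1 x₁) ∂μ0)
        - ∫ x₁, ∫ x₂, α₂ (x₁, x₂) * (Eh (x₁, x₂) - g₂ (x₁, x₂)) ∂(K0 x₁) ∂μ0 := by
    rw [← integral_sub hGθint hGdint]
    refine integral_congr_ae (key.mono fun x₁ hx => ?_)
    dsimp only
    rw [hx]; ring
  rw [ht2, ht3a, ht3b, ht1]
  ring
end

section
/- (Telescoping of debiasing terms with true weights) Let Q be a (possibly counterfactual) probability measure on a space 𝒵 = 𝒳₁ × ⋯ × 𝒳_K × ℝ of the form Q = P^{(c_{K+1})}_{Y|X̄_K} ⊗ P^{(c_K)}_{X_K|X̄_{K-1}} ⊗ ⋯ ⊗ P^{(c_1)}_{X₁}, where each factor comes from one of two joint probability measures P⁰, P¹. For 1 ≤ k ≤ K, let α_k(X̄_k) be the Radon–Nikodym derivative (assumed to exist and be square-integrable under P^{(c_{k+1})}) of the measure ∏_{j≤k} P^{(c_j)}_{X_j|X̄_{j-1}} with respect to the factual law of X̄_k under P^{(c_{k+1})}. Then for any square-integrable functions g₁,…,g_K and with g_{K+1} := h(Y) bounded, E_{(c₁)}[g₁(X₁)]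 + Σ_{k=1}^K E_{(c_{k+1})}[α_k(X̄_k)(g_{k+1}(X̄_{k+1}) − g_k(X̄_k))] = E_Q[h(Y)]. -/
open MeasureTheory ProbabilityTheory
open scoped ENNReal

/-- The counterfactual law of `X̄ₖ = (X₁, …, Xₖ)` built by composing the
conditional-mechanism kernels `κ 0, …, κ (k-1)`. -/
noncomputable def seqMeasure {𝓧 : Type*} [MeasurableSpace 𝓧]
    (κ : (k : ℕ) → Kernel (Fin k → 𝓧) 𝓧) : (k : ℕ) → Measure (Fin k → 𝓧)
  | 0 => Measure.dirac (fun i => i.elim0)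
  | (k + 1) => (seqMeasure κ k).bind (fun v => (κ k v).map (fun x => Fin.snoc v x))

/-- Restriction of a tuple to its first `k` coordinates (junk value beyond `K`). -/
def restr {𝓧 : Type*} [Inhabited 𝓧] (K : ℕ) (x : Fin K → 𝓧) (k : ℕ) : Fin k → 𝓧 :=
  fun i => if h : (i : ℕ) < K then x ⟨i, h⟩ else default

section Aux
variable {α β γ : Type*} [MeasurableSpace α] [MeasurableSpace β] [MeasurableSpace γ]

lemma bind_map_eq (μ : Measure α) [SFinite μ] (κ : Kernel α β) [IsSFiniteKernel κ]
    {f : α → β → γ} (hf : Measurable (fun p : α × β => f p.1 p.2)) :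
    μ.bind (fun a => (κ a).map (f a)) = (μ.compProd κ).map (fun p => f p.1 p.2) := by
  have hfam : (fun a => (κ a).map (f a))
      = fun a => ((Kernel.id ×ₖ κ) a).map (fun p : α × β => f p.1 p.2) := by
    funext a
    rw [Kernel.prod_apply, Kernel.id_apply, Measure.dirac_prod,
      Measure.map_map hf measurable_prodMk_left]
    rfl
  have hmeas : Measurable (fun a => (κ a).map (f a)) := by
    rw [hfam]
    exact (Measure.measurable_map _ hf).comp (Kernel.measurable _)
  ext s hs
  rw [Measure.bind_apply hs hmeas.aemeasurable, Measure.map_apply hf hs, Measure.compProd_apply (hf hs)]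
  congr 1
  funext a
  exact Measure.map_apply (hf.comp measurable_prodMk_left) hs

lemma compProd_withDensity (ν : Measure α) [SFinite ν] (κ : Kernel α β) [IsSFiniteKernel κ]
    {ρ : α → ℝ≥0∞} (hρ : Measurable ρ) :
    (ν.withDensity ρ).compProd κ = (ν.compProd κ).withDensity (fun p => ρ p.1) := by
  ext s hs
  rw [Measure.compProd_apply hs, withDensity_apply _ hs,
    lintegral_withDensity_eq_lintegral_mul ν hρ (Kernel.measurable_kernel_prodMk_left hs),
    ← lintegral_indicator hs (fun p => ρ p.1),
    Measure.lintegral_compProd (show Measurable (s.indicator fun p : α × β => ρ p.1) from (hρ.comp measurable_fst).indicator hs)]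
  congr 1
  funext a
  have : ∀ b, s.indicator (fun p : α × β => ρ p.1) (a, b)
      = (Prod.mk a ⁻¹' s).indicator (fun _ => ρ a) b := by
    intro b
    by_cases hb : (a, b) ∈ s <;> simp [Set.indicator, hb]
  simp_rw [this]
  rw [lintegral_indicator (measurable_prodMk_left hs), setLIntegral_const]
  rfl


lemma compProd_eq_withDensity (μ ν : Measure α) [IsFiniteMeasure μ] [SFinite ν]
    (hμν : μ ≪ ν) (κ : Kernel α β) [IsSFiniteKernel κ] [IsFiniteMeasure ν] :
    μ.compProd κ = (ν.compProd κ).withDensity (fun p => μ.rnDeriv ν p.1) := by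
  conv_lhs => rw [← Measure.withDensity_rnDeriv_eq μ ν hμν]
  exact compProd_withDensity ν κ (Measure.measurable_rnDeriv μ ν)

lemma integral_rnDeriv_fst_mul (μ ν : Measure α) [IsFiniteMeasure μ] [IsFiniteMeasure ν]
    (hμν : μ ≪ ν) (κ : Kernel α β) [IsMarkovKernel κ] (F : α × β → ℝ) :
    ∫ p, (μ.rnDeriv ν p.1).toReal * F p ∂(ν.compProd κ) = ∫ p, F p ∂(μ.compProd κ) := by
  have hwd := compProd_eq_withDensity μ ν hμν κ
  have hac2 : μ.compProd κ ≪ ν.compProd κ := by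
    rw [hwd]; exact withDensity_absolutelyContinuous _ _
  have hrn : (μ.compProd κ).rnDeriv (ν.compProd κ) =ᵐ[ν.compProd κ] fun p => μ.rnDeriv ν p.1 := by
    rw [hwd]
    exact Measure.rnDeriv_withDensity _ ((Measure.measurable_rnDeriv μ ν).comp measurable_fst)
  rw [← integral_rnDeriv_smul (μ := μ.compProd κ) (ν := ν.compProd κ) hac2 (f := F)]
  refine integral_congr_ae ?_
  filter_upwards [hrn] with p hp
  rw [hp, smul_eq_mul]

lemma integrable_rnDeriv_fst_mul_iff (μ ν : Measure α) [IsFiniteMeasure μ] [IsFiniteMeasure ν]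
    (hμν : μ ≪ ν) (κ : Kernel α β) [IsMarkovKernel κ] (F : α × β → ℝ) :
    Integrable (fun p => (μ.rnDeriv ν p.1).toReal * F p) (ν.compProd κ)
      ↔ Integrable F (μ.compProd κ) := by
  have hwd := compProd_eq_withDensity μ ν hμν κ
  have hac2 : μ.compProd κ ≪ ν.compProd κ := by
    rw [hwd]; exact withDensity_absolutelyContinuous _ _
  have hrn : (μ.compProd κ).rnDeriv (ν.compProd κ) =ᵐ[ν.compProd κ] fun p => μ.rnDeriv ν p.1 := by
    rw [hwd]
    exact Measure.rnDeriv_withDensity _ ((Measure.measurable_rnDeriv μ ν).comp measurable_fst)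
  rw [← integrable_rnDeriv_smul_iff (μ := μ.compProd κ) (ν := ν.compProd κ) hac2 (f := F)]
  refine integrable_congr ?_
  filter_upwards [hrn] with p hp
  rw [hp, smul_eq_mul]

lemma prob_eq_dirac {δ : Type*} [MeasurableSpace δ] [Subsingleton δ] (d : δ)
    (m : Measure δ) [IsProbabilityMeasure m] : m = Measure.dirac d := by
  ext s hs
  rcases s.eq_empty_or_nonempty with h | ⟨x, hx⟩
  · simp [h]
  · have : s = Set.univ := by
      ext y; simp only [Set.mem_univ, iff_true]
      rwa [Subsingleton.elim y x]
    subst this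
    simp

lemma measurable_snocU {𝓧 : Type*} [MeasurableSpace 𝓧] {k : ℕ} :
    Measurable (fun p : (Fin k → 𝓧) × 𝓧 => Fin.snoc p.1 p.2 : _ → Fin (k+1) → 𝓧) := by
  refine measurable_pi_lambda _ (fun i => ?_)
  induction i using Fin.lastCases with
  | last => simp only [Fin.snoc_last]; exact measurable_snd
  | cast j =>
    simp only [Fin.snoc_castSucc]
    exact (measurable_pi_apply j).comp measurable_fst

lemma measurable_restr {𝓧 : Type*} [MeasurableSpace 𝓧] [Inhabited 𝓧] (K k : ℕ) :
    Measurable (fun x : Fin K → 𝓧 => restr K x k) := by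
  refine measurable_pi_lambda _ (fun i => ?_)
  unfold restr
  split
  · exact measurable_pi_apply _
  · exact measurable_const

lemma restr_self {𝓧 : Type*} [Inhabited 𝓧] (K : ℕ) (x : Fin K → 𝓧) : restr K x K = x := by
  funext i
  simp [restr, i.isLt]

lemma init_restr {𝓧 : Type*} [Inhabited 𝓧] (K k : ℕ) (x : Fin K → 𝓧) :
    Fin.init (restr K x (k+1)) = restr K x k := by
  funext i
  simp [restr, Fin.init]


lemma measurable_finInit {𝓧 : Type*} [MeasurableSpace 𝓧] {k : ℕ} :
    Measurable (fun w : Fin (k+1) → 𝓧 => Fin.init w) :=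
  measurable_pi_lambda _ (fun i => measurable_pi_apply _)

lemma isProbabilityMeasure_seqMeasure {𝓧 : Type*} [MeasurableSpace 𝓧]
    (κ : (k : ℕ) → Kernel (Fin k → 𝓧) 𝓧) [∀ k, IsMarkovKernel (κ k)] :
    ∀ k, IsProbabilityMeasure (seqMeasure κ k) := by
  intro k
  induction k with
  | zero => rw [seqMeasure]; infer_instance
  | succ k ih =>
    haveI := ih
    rw [seqMeasure, bind_map_eq _ _ measurable_snocU]
    exact Measure.isProbabilityMeasure_map measurable_snocU.aemeasurable

lemma seqMeasure_succ_eq {𝓧 : Type*} [MeasurableSpace 𝓧]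
    (κ : (k : ℕ) → Kernel (Fin k → 𝓧) 𝓧) [∀ k, IsMarkovKernel (κ k)] (k : ℕ) :
    seqMeasure κ (k+1)
      = ((seqMeasure κ k).compProd (κ k)).map (fun p => Fin.snoc p.1 p.2) := by
  haveI := isProbabilityMeasure_seqMeasure κ k
  rw [seqMeasure, bind_map_eq _ _ measurable_snocU]

end Aux

/-- Telescoping of debiasing terms with true weights: with
`αₖ` the true RN derivative of the counterfactual law of `X̄ₖ` w.r.t. its
factual law under `P^{(c_{k+1})}`, for any square-integrable `g₁, …, g_K` and
bounded `h`, the multiply-robust estimating equation equals `E_Q[h(Y)]`.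
(Indices are shifted down by one: paper `c_k` is `c (k-1)` here.) -/
theorem telescoping_true_weights
    {𝓧 : Type*} [MeasurableSpace 𝓧] [Inhabited 𝓧]
    (K : ℕ) (hK : 0 < K) (c : ℕ → Bool)
    (P : Bool → Measure ((Fin K → 𝓧) × ℝ)) [∀ t, IsProbabilityMeasure (P t)]
    (κ : (k : ℕ) → Bool → Kernel (Fin k → 𝓧) 𝓧) [∀ k t, IsMarkovKernel (κ k t)]
    (ξ : Bool → Kernel (Fin K → 𝓧) ℝ) [∀ t, IsMarkovKernel (ξ t)]
    -- κ k t is (a version of) the conditional law of X_{k+1} given X̄_k under P t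
    (hκ : ∀ t : Bool, ∀ k < K,
      (P t).map (fun ω => restr K ω.1 (k + 1)) =
        ((P t).map (fun ω => restr K ω.1 k)).bind
          (fun v => (κ k t v).map (fun x => Fin.snoc v x)))
    -- ξ t is (a version of) the conditional law of Y given X̄_K under P t
    (hξ : ∀ t : Bool, P t =
      ((P t).map Prod.fst).bind (fun v => (ξ t v).map (fun y => (v, y))))
    (h : ℝ → ℝ) (hh : Measurable h) (hbd : ∃ C, ∀ y, |h y| ≤ C)
    (g : (k : ℕ) → (Fin k → 𝓧) → ℝ) (hgm : ∀ k, Measurable (g k))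
    (hg : ∀ k, 1 ≤ k → k ≤ K →
      MemLp (fun ω : (Fin K → 𝓧) × ℝ => g k (restr K ω.1 k)) 2 (P (c k)))
    -- weak overlap: the counterfactual law of X̄_k is a.c. w.r.t. its factual law
    (hac : ∀ k, 1 ≤ k → k ≤ K →
      seqMeasure (fun j => κ j (c j)) k ≪ (P (c k)).map (fun ω => restr K ω.1 k))
    -- square-integrability of the true weights α_k
    (hα : ∀ k, 1 ≤ k → k ≤ K →
      MemLp (fun ω : (Fin K → 𝓧) × ℝ =>
        ((seqMeasure (fun j => κ j (c j)) k).rnDeriv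
          ((P (c k)).map (fun ω' => restr K ω'.1 k)) (restr K ω.1 k)).toReal)
        2 (P (c k))) :
    (∫ ω, g 1 (restr K ω.1 1) ∂(P (c 0)))
      + ∑ j ∈ Finset.range K,
          ∫ ω, ((seqMeasure (fun i => κ i (c i)) (j + 1)).rnDeriv
                ((P (c (j + 1))).map (fun ω' => restr K ω'.1 (j + 1)))
                (restr K ω.1 (j + 1))).toReal
              * ((if j + 1 = K then h ω.2 else g (j + 2) (restr K ω.1 (j + 2)))
                  - g (j + 1) (restr K ω.1 (j + 1))) ∂(P (c (j + 1)))
    = ∫ y, h y ∂((seqMeasure (fun j => κ j (c j)) K).bind (fun v => ξ (c K) v)) := by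
  classical
  set M : (k : ℕ) → Measure (Fin k → 𝓧) := seqMeasure (fun i => κ i (c i)) with hM
  haveI hMprob : ∀ k, IsProbabilityMeasure (M k) :=
    isProbabilityMeasure_seqMeasure (fun i => κ i (c i))
  have hrkm : ∀ k : ℕ, Measurable (fun ω : (Fin K → 𝓧) × ℝ => restr K ω.1 k) :=
    fun k => (measurable_restr K k).comp measurable_fst
  haveI hνprob : ∀ k : ℕ,
      IsProbabilityMeasure ((P (c k)).map (fun ω : (Fin K → 𝓧) × ℝ => restr K ω.1 k)) :=
    fun k => Measure.isProbabilityMeasure_map (hrkm k).aemeasurable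
  -- weight functions
  have hWm : ∀ k : ℕ, Measurable (fun v : Fin k → 𝓧 =>
      ((M k).rnDeriv ((P (c k)).map (fun ω' : (Fin K → 𝓧) × ℝ => restr K ω'.1 k)) v).toReal) :=
    fun k => (Measure.measurable_rnDeriv _ _).ennreal_toReal
  -- integrability of g k w.r.t. M k
  have hInt_g : ∀ k, 1 ≤ k → k ≤ K → Integrable (g k) (M k) := by
    intro k h1 h2
    have hmul : Integrable (fun ω : (Fin K → 𝓧) × ℝ =>
        ((M k).rnDeriv ((P (c k)).map (fun ω' : (Fin K → 𝓧) × ℝ => restr K ω'.1 k))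
            (restr K ω.1 k)).toReal * g k (restr K ω.1 k)) (P (c k)) := by
      have hsm := (hg k h1 h2).smul (hα k h1 h2)
        (r := 1) (hpqr := ⟨by norm_num [ENNReal.inv_two_add_inv_two]⟩)
      exact memLp_one_iff_integrable.mp (by simpa [smul_eq_mul, Pi.mul_def] using hsm)
    have h2' : Integrable (fun v : Fin k → 𝓧 =>
        ((M k).rnDeriv ((P (c k)).map (fun ω' : (Fin K → 𝓧) × ℝ => restr K ω'.1 k)) v).toReal
          * g k v) ((P (c k)).map (fun ω : (Fin K → 𝓧) × ℝ => restr K ω.1 k)) :=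
      (integrable_map_measure ((hWm k).mul (hgm k)).aestronglyMeasurable
        (hrkm k).aemeasurable).mpr hmul
    exact (integrable_rnDeriv_smul_iff (hac k h1 h2)).mp (by simpa [smul_eq_mul] using h2')
  -- value of each summand
  have key : ∀ j < K,
      (∫ ω, ((M (j + 1)).rnDeriv
                ((P (c (j + 1))).map (fun ω' => restr K ω'.1 (j + 1)))
                (restr K ω.1 (j + 1))).toReal
              * ((if j + 1 = K then h ω.2 else g (j + 2) (restr K ω.1 (j + 2)))
                  - g (j + 1) (restr K ω.1 (j + 1))) ∂(P (c (j + 1))))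
        = (if j + 1 < K then ∫ v, g (j + 2) v ∂(M (j + 2))
            else ∫ y, h y ∂((M K).bind (fun v => ξ (c K) v)))
          - ∫ v, g (j + 1) v ∂(M (j + 1)) := by
    intro j hj
    have h1j : 1 ≤ j + 1 := Nat.le_add_left 1 j
    have h2j : j + 1 ≤ K := hj
    -- the "B" part, uniform in the case split
    have hBint : Integrable (fun ω : (Fin K → 𝓧) × ℝ =>
        ((M (j+1)).rnDeriv ((P (c (j+1))).map (fun ω' : (Fin K → 𝓧) × ℝ => restr K ω'.1 (j+1)))
            (restr K ω.1 (j+1))).toReal * g (j+1) (restr K ω.1 (j+1))) (P (c (j+1))) := by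
      have hsm := (hg (j+1) h1j h2j).smul (hα (j+1) h1j h2j)
        (r := 1) (hpqr := ⟨by norm_num [ENNReal.inv_two_add_inv_two]⟩)
      exact memLp_one_iff_integrable.mp (by simpa [smul_eq_mul, Pi.mul_def] using hsm)
    have hBval : (∫ ω, ((M (j+1)).rnDeriv
            ((P (c (j+1))).map (fun ω' : (Fin K → 𝓧) × ℝ => restr K ω'.1 (j+1)))
            (restr K ω.1 (j+1))).toReal * g (j+1) (restr K ω.1 (j+1)) ∂(P (c (j+1))))
        = ∫ v, g (j+1) v ∂(M (j+1)) := by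
      have e1 : (∫ ω, ((M (j+1)).rnDeriv
            ((P (c (j+1))).map (fun ω' : (Fin K → 𝓧) × ℝ => restr K ω'.1 (j+1)))
            (restr K ω.1 (j+1))).toReal * g (j+1) (restr K ω.1 (j+1)) ∂(P (c (j+1))))
          = ∫ v, ((M (j+1)).rnDeriv
            ((P (c (j+1))).map (fun ω' : (Fin K → 𝓧) × ℝ => restr K ω'.1 (j+1))) v).toReal
              * g (j+1) v ∂((P (c (j+1))).map (fun ω : (Fin K → 𝓧) × ℝ => restr K ω.1 (j+1))) :=
        (integral_map (hrkm (j+1)).aemeasurable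
          ((hWm (j+1)).mul (hgm (j+1))).aestronglyMeasurable).symm
      rw [e1]
      have := integral_rnDeriv_smul (μ := M (j+1))
        (ν := (P (c (j+1))).map (fun ω : (Fin K → 𝓧) × ℝ => restr K ω.1 (j+1)))
        (hac (j+1) h1j h2j) (f := g (j+1))
      rw [← this]
      simp [smul_eq_mul]
    by_cases hjK : j + 1 = K
    · -- last step : uses the outcome mechanism ξ
      subst hjK
      have hPfst : (fun ω : (Fin (j+1) → 𝓧) × ℝ => restr (j+1) ω.1 (j+1)) = Prod.fst := by
        funext ω; exact restr_self _ _
      have hP : P (c (j+1))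
          = ((P (c (j+1))).map (fun ω : (Fin (j+1) → 𝓧) × ℝ => restr (j+1) ω.1 (j+1))).compProd
              (ξ (c (j+1))) := by
        rw [hPfst]
        conv_lhs => rw [hξ (c (j+1))]
        rw [bind_map_eq _ _ (f := fun (v : Fin (j+1) → 𝓧) (y : ℝ) => (v, y))
          (measurable_fst.prodMk measurable_snd)]
        rw [show (fun p : (Fin (j+1) → 𝓧) × ℝ => (p.1, p.2)) = id from by funext p; rfl]
        rw [Measure.map_id]
      have hbind : (M (j+1)).bind (fun v => ξ (c (j+1)) v)
          = ((M (j+1)).compProd (ξ (c (j+1)))).map (fun p : (Fin (j+1) → 𝓧) × ℝ => p.2) := by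
        rw [show (fun v => ξ (c (j+1)) v) = (fun v => (ξ (c (j+1)) v).map (fun y => y)) from by
          funext v; rw [Measure.map_id']]
        exact bind_map_eq _ _ (f := fun _ (y : ℝ) => y) measurable_snd
      -- integrability of the "A" part
      have hAint : Integrable (fun ω : (Fin (j+1) → 𝓧) × ℝ =>
          ((M (j+1)).rnDeriv
            ((P (c (j+1))).map (fun ω' : (Fin (j+1) → 𝓧) × ℝ => restr (j+1) ω'.1 (j+1)))
            (restr (j+1) ω.1 (j+1))).toReal * h ω.2) (P (c (j+1))) := by
        obtain ⟨C, hC⟩ := hbd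
        have hh2 : MemLp (fun ω : (Fin (j+1) → 𝓧) × ℝ => h ω.2) 2 (P (c (j+1))) := by
          refine MemLp.mono_exponent ?_ (by norm_num : (2 : ℝ≥0∞) ≤ ⊤)
          exact memLp_top_of_bound (hh.comp measurable_snd).aestronglyMeasurable C
            (Filter.Eventually.of_forall fun ω => by simpa [Real.norm_eq_abs] using hC ω.2)
        have hsm := hh2.smul (hα (j+1) h1j h2j)
          (r := 1) (hpqr := ⟨by norm_num [ENNReal.inv_two_add_inv_two]⟩)
        exact memLp_one_iff_integrable.mp (by simpa [smul_eq_mul, Pi.mul_def] using hsm)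
      have hAval : (∫ ω, ((M (j+1)).rnDeriv
            ((P (c (j+1))).map (fun ω' : (Fin (j+1) → 𝓧) × ℝ => restr (j+1) ω'.1 (j+1)))
            (restr (j+1) ω.1 (j+1))).toReal * h ω.2 ∂(P (c (j+1))))
          = ∫ y, h y ∂((M (j+1)).bind (fun v => ξ (c (j+1)) v)) := by
        calc (∫ ω, ((M (j+1)).rnDeriv
              ((P (c (j+1))).map (fun ω' : (Fin (j+1) → 𝓧) × ℝ => restr (j+1) ω'.1 (j+1)))
              (restr (j+1) ω.1 (j+1))).toReal * h ω.2 ∂(P (c (j+1))))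
            = ∫ p, ((M (j+1)).rnDeriv
              ((P (c (j+1))).map (fun ω' : (Fin (j+1) → 𝓧) × ℝ => restr (j+1) ω'.1 (j+1)))
              p.1).toReal * h p.2
              ∂(((P (c (j+1))).map
                  (fun ω : (Fin (j+1) → 𝓧) × ℝ => restr (j+1) ω.1 (j+1))).compProd
                  (ξ (c (j+1)))) := by
              rw [← hP]
              refine integral_congr_ae (Filter.Eventually.of_forall fun ω => ?_)
              simp only [restr_self]
          _ = ∫ p, h p.2 ∂((M (j+1)).compProd (ξ (c (j+1)))) :=
              integral_rnDeriv_fst_mul (M (j+1)) _ (hac (j+1) h1j h2j) (ξ (c (j+1))) _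
          _ = ∫ y, h y ∂(((M (j+1)).compProd (ξ (c (j+1)))).map
                (fun p : (Fin (j+1) → 𝓧) × ℝ => p.2)) :=
              (integral_map measurable_snd.aemeasurable hh.aestronglyMeasurable).symm
          _ = ∫ y, h y ∂((M (j+1)).bind (fun v => ξ (c (j+1)) v)) := by rw [hbind]
      simp only [eq_self_iff_true, if_true, lt_self_iff_false, if_false]
      rw [show (∫ ω, ((M (j+1)).rnDeriv
            ((P (c (j+1))).map (fun ω' : (Fin (j+1) → 𝓧) × ℝ => restr (j+1) ω'.1 (j+1)))
            (restr (j+1) ω.1 (j+1))).toReal * (h ω.2 - g (j+1) (restr (j+1) ω.1 (j+1)))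
            ∂(P (c (j+1))))
          = (∫ ω, ((M (j+1)).rnDeriv
            ((P (c (j+1))).map (fun ω' : (Fin (j+1) → 𝓧) × ℝ => restr (j+1) ω'.1 (j+1)))
            (restr (j+1) ω.1 (j+1))).toReal * h ω.2 ∂(P (c (j+1))))
            - (∫ ω, ((M (j+1)).rnDeriv
            ((P (c (j+1))).map (fun ω' : (Fin (j+1) → 𝓧) × ℝ => restr (j+1) ω'.1 (j+1)))
            (restr (j+1) ω.1 (j+1))).toReal * g (j+1) (restr (j+1) ω.1 (j+1)) ∂(P (c (j+1))))
          from by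
            rw [← integral_sub hAint hBint]
            refine integral_congr_ae (Filter.Eventually.of_forall fun ω => ?_)
            ring]
      rw [hAval, hBval]
    · -- intermediate step
      have hlt : j + 1 < K := lt_of_le_of_ne h2j hjK
      have h1j2 : 1 ≤ j + 2 := by omega
      have h2j2 : j + 2 ≤ K := by omega
      have hmap2 : (P (c (j+1))).map (fun ω : (Fin K → 𝓧) × ℝ => restr K ω.1 (j+2))
          = ((((P (c (j+1))).map
              (fun ω : (Fin K → 𝓧) × ℝ => restr K ω.1 (j+1))).compProd
              (κ (j+1) (c (j+1)))).map (fun p => Fin.snoc p.1 p.2)) := by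
        rw [hκ (c (j+1)) (j+1) hlt, bind_map_eq _ _ measurable_snocU]
      have hsmF : AEStronglyMeasurable (fun w : Fin (j+2) → 𝓧 =>
          ((M (j+1)).rnDeriv
            ((P (c (j+1))).map (fun ω' : (Fin K → 𝓧) × ℝ => restr K ω'.1 (j+1)))
            (Fin.init w)).toReal * g (j+2) w)
          ((P (c (j+1))).map (fun ω : (Fin K → 𝓧) × ℝ => restr K ω.1 (j+2))) :=
        (((hWm (j+1)).comp measurable_finInit).mul (hgm (j+2))).aestronglyMeasurable
      have hsmF' : AEStronglyMeasurable (fun w : Fin (j+2) → 𝓧 =>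
          ((M (j+1)).rnDeriv
            ((P (c (j+1))).map (fun ω' : (Fin K → 𝓧) × ℝ => restr K ω'.1 (j+1)))
            (Fin.init w)).toReal * g (j+2) w)
          (((((P (c (j+1))).map
              (fun ω : (Fin K → 𝓧) × ℝ => restr K ω.1 (j+1))).compProd
              (κ (j+1) (c (j+1)))).map (fun p => Fin.snoc p.1 p.2))) :=
        (((hWm (j+1)).comp measurable_finInit).mul (hgm (j+2))).aestronglyMeasurable
      -- integrability of the "A" part
      have hg2M : Integrable (g (j+2)) (M (j+2)) := hInt_g (j+2) h1j2 h2j2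
      have i2 : Integrable (fun p : (Fin (j+1) → 𝓧) × 𝓧 => g (j+2) (Fin.snoc p.1 p.2))
          ((M (j+1)).compProd (κ (j+1) (c (j+1)))) := by
        rw [hM, seqMeasure_succ_eq (fun i => κ i (c i)) (j+1)] at hg2M
        exact (integrable_map_measure (hgm (j+2)).aestronglyMeasurable
          measurable_snocU.aemeasurable).mp hg2M
      have i3 : Integrable (fun p : (Fin (j+1) → 𝓧) × 𝓧 =>
          ((M (j+1)).rnDeriv
            ((P (c (j+1))).map (fun ω' : (Fin K → 𝓧) × ℝ => restr K ω'.1 (j+1)))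
            p.1).toReal * g (j+2) (Fin.snoc p.1 p.2))
          (((P (c (j+1))).map
            (fun ω : (Fin K → 𝓧) × ℝ => restr K ω.1 (j+1))).compProd (κ (j+1) (c (j+1)))) :=
        (integrable_rnDeriv_fst_mul_iff (M (j+1)) _ (hac (j+1) h1j h2j) _ _).mpr i2
      have i4 : Integrable (fun w : Fin (j+2) → 𝓧 =>
          ((M (j+1)).rnDeriv
            ((P (c (j+1))).map (fun ω' : (Fin K → 𝓧) × ℝ => restr K ω'.1 (j+1)))
            (Fin.init w)).toReal * g (j+2) w)
          ((P (c (j+1))).map (fun ω : (Fin K → 𝓧) × ℝ => restr K ω.1 (j+2))) := by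
        rw [hmap2]
        refine (integrable_map_measure hsmF' measurable_snocU.aemeasurable).mpr ?_
        refine i3.congr (Filter.Eventually.of_forall fun p => ?_)
        simp only [Function.comp, Fin.init_snoc]
      have hAint : Integrable (fun ω : (Fin K → 𝓧) × ℝ =>
          ((M (j+1)).rnDeriv
            ((P (c (j+1))).map (fun ω' : (Fin K → 𝓧) × ℝ => restr K ω'.1 (j+1)))
            (restr K ω.1 (j+1))).toReal * g (j+2) (restr K ω.1 (j+2))) (P (c (j+1))) := by
        have i6 := (integrable_map_measure hsmF (hrkm (j+2)).aemeasurable).mp i4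
        refine i6.congr (Filter.Eventually.of_forall fun ω => ?_)
        simp only [Function.comp, init_restr]
      -- value of the "A" part
      have hAval : (∫ ω, ((M (j+1)).rnDeriv
            ((P (c (j+1))).map (fun ω' : (Fin K → 𝓧) × ℝ => restr K ω'.1 (j+1)))
            (restr K ω.1 (j+1))).toReal * g (j+2) (restr K ω.1 (j+2)) ∂(P (c (j+1))))
          = ∫ v, g (j+2) v ∂(M (j+2)) := by
        calc (∫ ω, ((M (j+1)).rnDeriv
              ((P (c (j+1))).map (fun ω' : (Fin K → 𝓧) × ℝ => restr K ω'.1 (j+1)))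
              (restr K ω.1 (j+1))).toReal * g (j+2) (restr K ω.1 (j+2)) ∂(P (c (j+1))))
            = ∫ ω, ((M (j+1)).rnDeriv
              ((P (c (j+1))).map (fun ω' : (Fin K → 𝓧) × ℝ => restr K ω'.1 (j+1)))
              (Fin.init (restr K ω.1 (j+2)))).toReal * g (j+2) (restr K ω.1 (j+2))
              ∂(P (c (j+1))) := by
              refine integral_congr_ae (Filter.Eventually.of_forall fun ω => ?_)
              simp only [init_restr]
          _ = ∫ w, ((M (j+1)).rnDeriv
              ((P (c (j+1))).map (fun ω' : (Fin K → 𝓧) × ℝ => restr K ω'.1 (j+1)))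
              (Fin.init w)).toReal * g (j+2) w
              ∂((P (c (j+1))).map (fun ω : (Fin K → 𝓧) × ℝ => restr K ω.1 (j+2))) :=
              (integral_map (hrkm (j+2)).aemeasurable hsmF).symm
          _ = ∫ w, ((M (j+1)).rnDeriv
              ((P (c (j+1))).map (fun ω' : (Fin K → 𝓧) × ℝ => restr K ω'.1 (j+1)))
              (Fin.init w)).toReal * g (j+2) w
              ∂(((((P (c (j+1))).map
                (fun ω : (Fin K → 𝓧) × ℝ => restr K ω.1 (j+1))).compProd
                (κ (j+1) (c (j+1)))).map (fun p => Fin.snoc p.1 p.2))) := by rw [hmap2]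
          _ = ∫ p, ((M (j+1)).rnDeriv
              ((P (c (j+1))).map (fun ω' : (Fin K → 𝓧) × ℝ => restr K ω'.1 (j+1)))
              p.1).toReal * g (j+2) (Fin.snoc p.1 p.2)
              ∂(((P (c (j+1))).map
                (fun ω : (Fin K → 𝓧) × ℝ => restr K ω.1 (j+1))).compProd
                (κ (j+1) (c (j+1)))) := by
              rw [integral_map measurable_snocU.aemeasurable hsmF']
              refine integral_congr_ae (Filter.Eventually.of_forall fun p => ?_)
              simp only [Fin.init_snoc]
          _ = ∫ p, g (j+2) (Fin.snoc p.1 p.2)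
              ∂((M (j+1)).compProd (κ (j+1) (c (j+1)))) :=
              integral_rnDeriv_fst_mul (M (j+1)) _ (hac (j+1) h1j h2j) _ _
          _ = ∫ w, g (j+2) w ∂(((M (j+1)).compProd (κ (j+1) (c (j+1)))).map
                (fun p => Fin.snoc p.1 p.2)) :=
              (integral_map measurable_snocU.aemeasurable
                (hgm (j+2)).aestronglyMeasurable).symm
          _ = ∫ v, g (j+2) v ∂(M (j+2)) := by
              rw [hM, seqMeasure_succ_eq (fun i => κ i (c i)) (j+1)]
      simp only [if_neg hjK, if_pos hlt]
      rw [show (∫ ω, ((M (j+1)).rnDeriv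
            ((P (c (j+1))).map (fun ω' : (Fin K → 𝓧) × ℝ => restr K ω'.1 (j+1)))
            (restr K ω.1 (j+1))).toReal
            * (g (j+2) (restr K ω.1 (j+2)) - g (j+1) (restr K ω.1 (j+1))) ∂(P (c (j+1))))
          = (∫ ω, ((M (j+1)).rnDeriv
            ((P (c (j+1))).map (fun ω' : (Fin K → 𝓧) × ℝ => restr K ω'.1 (j+1)))
            (restr K ω.1 (j+1))).toReal * g (j+2) (restr K ω.1 (j+2)) ∂(P (c (j+1))))
            - (∫ ω, ((M (j+1)).rnDeriv
            ((P (c (j+1))).map (fun ω' : (Fin K → 𝓧) × ℝ => restr K ω'.1 (j+1)))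
            (restr K ω.1 (j+1))).toReal * g (j+1) (restr K ω.1 (j+1)) ∂(P (c (j+1))))
          from by
            rw [← integral_sub hAint hBint]
            refine integral_congr_ae (Filter.Eventually.of_forall fun ω => ?_)
            ring]
      rw [hAval, hBval]
  -- base case
  have hbase : (∫ ω, g 1 (restr K ω.1 1) ∂(P (c 0))) = ∫ v, g 1 v ∂(M 1) := by
    have h0 : (P (c 0)).map (fun ω : (Fin K → 𝓧) × ℝ => restr K ω.1 0)
        = Measure.dirac (fun i : Fin 0 => i.elim0) := prob_eq_dirac _ _
    have h1 : (P (c 0)).map (fun ω : (Fin K → 𝓧) × ℝ => restr K ω.1 1) = M 1 := by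
      rw [hκ (c 0) 0 hK, h0, hM]
      rw [show seqMeasure (fun i => κ i (c i)) 1
          = (seqMeasure (fun i => κ i (c i)) 0).bind
              (fun v => (κ 0 (c 0) v).map (fun x => Fin.snoc v x)) from rfl]
      rw [show seqMeasure (fun i => κ i (c i)) 0
          = Measure.dirac (fun i : Fin 0 => i.elim0) from rfl]
    rw [show (∫ ω, g 1 (restr K ω.1 1) ∂(P (c 0)))
        = ∫ v, g 1 v ∂((P (c 0)).map (fun ω : (Fin K → 𝓧) × ℝ => restr K ω.1 1)) from
        (integral_map (hrkm 1).aemeasurable (hgm 1).aestronglyMeasurable).symm, h1]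
  -- telescoping
  set T : ℕ → ℝ := fun n => if n < K then ∫ v, g (n + 1) v ∂(M (n + 1))
      else ∫ y, h y ∂((M K).bind (fun v => ξ (c K) v)) with hT
  have hsum : ∑ j ∈ Finset.range K,
      (∫ ω, ((M (j + 1)).rnDeriv
                ((P (c (j + 1))).map (fun ω' => restr K ω'.1 (j + 1)))
                (restr K ω.1 (j + 1))).toReal
              * ((if j + 1 = K then h ω.2 else g (j + 2) (restr K ω.1 (j + 2)))
                  - g (j + 1) (restr K ω.1 (j + 1))) ∂(P (c (j + 1))))
      = T K - T 0 := by
    rw [← Finset.sum_range_sub T K]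
    refine Finset.sum_congr rfl (fun j hj => ?_)
    have hjK : j < K := Finset.mem_range.mp hj
    rw [key j hjK, hT]
    simp only [hjK, if_pos]
  rw [hsum, hbase]
  have h0 : T 0 = ∫ v, g 1 v ∂(M 1) := by simp [hT, hK]
  have hKK : T K = ∫ y, h y ∂((M K).bind fun v => ξ (c K) v) := by simp [hT]
  rw [h0, hKK]
  ring
end

section
/- (Doubly-robust simplification under full independence, case c_{K+1}=0) Suppose under both P⁰ and P¹ the explanatory variables X₁,…,X_K are mutually independent, and the joint law factors as P^t = P^t_{Y|X} ⊗ ∏_k P^t_{X_k}. Fix a change vector c with c_{K+1} = 0, and let X_c = (X_k : c_k = 1), X_{−c} = (X_k : c_k = 0). Define θ^c = ∫ h(y) dP⁰_{Y|X} ∏_{k: c_k=1} dP¹_{X_k} ∏_{k: c_k=0} dP⁰_{X_k}. Let γ(x_c) = E_{P⁰}[h(Y) | X_c = x_c] and α(x_c) = dP¹_{X_c}/dP⁰_{X_c}(x_c) (which exists by overlap). Then for any pair (g, a) of square-integrable functions of X_c with g = γ or a = α, E_{P¹}[g(X_c)] + E_{P⁰}[a(X_c)(h(Y) − g(X_c))]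 = θ^c. -/
open MeasureTheory ProbabilityTheory

section DRAux

variable {𝓧 : Type*} [MeasurableSpace 𝓧] {K : ℕ}

private lemma dr_proj_meas (c : Fin K → Bool) :
    Measurable (fun x : Fin K → 𝓧 => fun i : {k // c k = true} => x i.1) :=
  measurable_pi_lambda _ fun i => measurable_pi_apply i.1

/-- marginal of a product measure on a sub-vector of coordinates -/
private lemma dr_marginal (P : Measure ((Fin K → 𝓧) × ℝ)) [IsProbabilityMeasure P]
    (νf : Fin K → Measure 𝓧) [∀ k, IsProbabilityMeasure (νf k)]
    (hind : P.map Prod.fst = Measure.pi νf) (c : Fin K → Bool) :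
    P.map (fun ω : (Fin K → 𝓧) × ℝ => fun i : {k // c k = true} => ω.1 i.1)
      = Measure.pi (fun i : {k // c k = true} => νf i.1) := by
  have h1 : P.map (fun ω : (Fin K → 𝓧) × ℝ => fun i : {k // c k = true} => ω.1 i.1)
      = (P.map Prod.fst).map (fun x : Fin K → 𝓧 => fun i : {k // c k = true} => x i.1) := by
    rw [Measure.map_map (dr_proj_meas c) measurable_fst]; rfl
  rw [h1, hind]
  have hmp := measurePreserving_piEquivPiSubtypeProd (ι := Fin K) (α := fun _ => 𝓧) νf
    (fun k => c k = true)
  have h2 : (fun x : Fin K → 𝓧 => fun i : {k // c k = true} => x i.1)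
      = Prod.fst ∘ (MeasurableEquiv.piEquivPiSubtypeProd (fun _ : Fin K => 𝓧)
          (fun k => c k = true)) := rfl
  rw [h2, ← Measure.map_map measurable_fst (MeasurableEquiv.measurable _), hmp.map_eq]
  exact Measure.fst_prod

/-- the key computation: integrals of `φ(X_c) h(Y)` against `P0` reduce to integrals of
`φ · G` against the law of `X_c`, where `G` is the partially-integrated regression. -/
private lemma dr_key (P0 : Measure ((Fin K → 𝓧) × ℝ)) [IsProbabilityMeasure P0]
    (νf : Fin K → Measure 𝓧) [∀ k, IsProbabilityMeasure (νf k)]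
    (hind0 : P0.map Prod.fst = Measure.pi νf)
    (c : Fin K → Bool) (h : ℝ → ℝ) (hh : Measurable h)
    (M : ℝ) (hM : ∀ y, |h y| ≤ M)
    (φ : ({k // c k = true} → 𝓧) → ℝ) (hφm : Measurable φ)
    (hφi : Integrable φ
      (P0.map (fun ω : (Fin K → 𝓧) × ℝ => fun i : {k // c k = true} => ω.1 i.1))) :
    ∫ ω, φ (fun i : {k // c k = true} => ω.1 i.1) * h ω.2 ∂P0
      = ∫ u, φ u * (∫ w, (∫ y, h y ∂(P0.condKernel
            ((MeasurableEquiv.piEquivPiSubtypeProd (fun _ : Fin K => 𝓧)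
              (fun k => c k = true)).symm (u, w))))
          ∂(Measure.pi (fun i : {k // ¬(c k = true)} => νf i.1)))
        ∂(P0.map (fun ω : (Fin K → 𝓧) × ℝ => fun i : {k // c k = true} => ω.1 i.1)) := by
  set ψ := MeasurableEquiv.piEquivPiSubtypeProd (fun _ : Fin K => 𝓧) (fun k => c k = true)
    with hψdef
  set F : (Fin K → 𝓧) → ℝ := fun x => ∫ y, h y ∂(P0.condKernel x) with hFdef
  set κ0 := Measure.pi (fun i : {k // ¬(c k = true)} => νf i.1) with hκ0def
  have hproj : Measurable (fun x : Fin K → 𝓧 => fun i : {k // c k = true} => x i.1) :=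
    dr_proj_meas c
  have hΦ : Measurable (fun ω : (Fin K → 𝓧) × ℝ => fun i : {k // c k = true} => ω.1 i.1) :=
    hproj.comp measurable_fst
  have hFsm : StronglyMeasurable F :=
    ((hh.comp measurable_snd).stronglyMeasurable).integral_kernel_prod_right'
  have hφΦ : Integrable (fun ω : (Fin K → 𝓧) × ℝ =>
      φ (fun i : {k // c k = true} => ω.1 i.1)) P0 :=
    (integrable_map_measure hφm.aestronglyMeasurable hΦ.aemeasurable).mp hφi
  have hint0 : Integrable (fun ω : (Fin K → 𝓧) × ℝ =>
      φ (fun i : {k // c k = true} => ω.1 i.1) * h ω.2) P0 := by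
    refine (hφΦ.norm.mul_const M).mono'
      ((hφm.comp hΦ).mul (hh.comp measurable_snd)).aestronglyMeasurable
      (Filter.Eventually.of_forall fun ω => ?_)
    rw [norm_mul]
    exact mul_le_mul_of_nonneg_left (by simpa [Real.norm_eq_abs] using hM ω.2) (norm_nonneg _)
  have hμ0' := dr_marginal P0 νf hind0 c
  have hmp := measurePreserving_piEquivPiSubtypeProd (ι := Fin K) (α := fun _ => 𝓧) νf
    (fun k => c k = true)
  have hint2 : Integrable (fun z : ({k // c k = true} → 𝓧) × ({k // ¬(c k = true)} → 𝓧) =>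
      φ z.1 * F (ψ.symm z)) ((Measure.pi fun i : {k // c k = true} => νf i.1).prod κ0) := by
    have hφpi : Integrable φ (Measure.pi fun i : {k // c k = true} => νf i.1) := by
      rwa [hμ0'] at hφi
    have hfst : Integrable (fun z : ({k // c k = true} → 𝓧) × ({k // ¬(c k = true)} → 𝓧) =>
        φ z.1) ((Measure.pi fun i : {k // c k = true} => νf i.1).prod κ0) := by
      refine (integrable_map_measure hφm.aestronglyMeasurable
        measurable_fst.aemeasurable).mp ?_
      rw [show ((Measure.pi fun i : {k // c k = true} => νf i.1).prod κ0).map Prod.fst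
          = (Measure.pi fun i : {k // c k = true} => νf i.1) from Measure.fst_prod]
      exact hφpi
    refine (hfst.norm.mul_const M).mono'
      ((hφm.comp measurable_fst).aestronglyMeasurable.mul
        ((hFsm.comp_measurable (MeasurableEquiv.measurable ψ.symm)).aestronglyMeasurable))
      (Filter.Eventually.of_forall fun z => ?_)
    rw [norm_mul]
    refine mul_le_mul_of_nonneg_left ?_ (norm_nonneg _)
    have hb := norm_integral_le_of_norm_le_const (μ := P0.condKernel (ψ.symm z)) (f := h)
      (C := M) (Filter.Eventually.of_forall fun y => by simpa [Real.norm_eq_abs] using hM y)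
    simpa [measure_univ] using hb
  calc ∫ ω, φ (fun i : {k // c k = true} => ω.1 i.1) * h ω.2 ∂P0
      = ∫ ω, φ (fun i : {k // c k = true} => ω.1 i.1) * h ω.2
          ∂(P0.fst ⊗ₘ P0.condKernel) := by rw [Measure.disintegrate]
    _ = ∫ x, ∫ y, φ (fun i : {k // c k = true} => x i.1) * h y ∂(P0.condKernel x) ∂P0.fst := by
        rw [Measure.integral_compProd (by rw [Measure.disintegrate]; exact hint0)]
    _ = ∫ x, φ (fun i : {k // c k = true} => x i.1) * F x ∂P0.fst := by
        congr 1; funext x; exact integral_const_mul _ _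
    _ = ∫ x, φ (fun i : {k // c k = true} => x i.1) * F x ∂(Measure.pi νf) := by
        rw [show P0.fst = P0.map Prod.fst from rfl, hind0]
    _ = ∫ z, φ z.1 * F (ψ.symm z)
          ∂((Measure.pi fun i : {k // c k = true} => νf i.1).prod κ0) := by
        rw [← hmp.integral_comp (MeasurableEquiv.measurableEmbedding ψ)
          (fun z => φ z.1 * F (ψ.symm z))]
        simp only [hψdef, MeasurableEquiv.symm_apply_apply]
        rfl
    _ = ∫ u, ∫ w, φ u * F (ψ.symm (u, w)) ∂κ0
          ∂(Measure.pi fun i : {k // c k = true} => νf i.1) := integral_prod _ hint2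
    _ = ∫ u, φ u * (∫ w, F (ψ.symm (u, w)) ∂κ0)
          ∂(Measure.pi fun i : {k // c k = true} => νf i.1) := by
        simp_rw [integral_const_mul]
    _ = ∫ u, φ u * (∫ w, F (ψ.symm (u, w)) ∂κ0)
          ∂(P0.map (fun ω : (Fin K → 𝓧) × ℝ => fun i : {k // c k = true} => ω.1 i.1)) := by
        rw [hμ0']

/-- the counterfactual parameter as an integral of `G` against the shifted sub-vector law -/
private lemma dr_theta (P0 : Measure ((Fin K → 𝓧) × ℝ)) [IsProbabilityMeasure P0]
    (ν : Bool → Fin K → Measure 𝓧) [∀ t k, IsProbabilityMeasure (ν t k)]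
    (c : Fin K → Bool) (h : ℝ → ℝ) (hh : Measurable h)
    (M : ℝ) (hM : ∀ y, |h y| ≤ M) :
    ∫ x, (∫ y, h y ∂(P0.condKernel x))
        ∂(Measure.pi (fun k => if c k then ν true k else ν false k))
      = ∫ u, (∫ w, (∫ y, h y ∂(P0.condKernel
            ((MeasurableEquiv.piEquivPiSubtypeProd (fun _ : Fin K => 𝓧)
              (fun k => c k = true)).symm (u, w))))
          ∂(Measure.pi (fun i : {k // ¬(c k = true)} => ν false i.1)))
        ∂(Measure.pi (fun i : {k // c k = true} => ν true i.1)) := by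
  set ψ := MeasurableEquiv.piEquivPiSubtypeProd (fun _ : Fin K => 𝓧) (fun k => c k = true)
    with hψdef
  set F : (Fin K → 𝓧) → ℝ := fun x => ∫ y, h y ∂(P0.condKernel x) with hFdef
  have hFsm : StronglyMeasurable F :=
    ((hh.comp measurable_snd).stronglyMeasurable).integral_kernel_prod_right'
  have hFbd : ∀ x, ‖F x‖ ≤ M := fun x => by
    have hb := norm_integral_le_of_norm_le_const (μ := P0.condKernel x) (f := h)
      (C := M) (Filter.Eventually.of_forall fun y => by simpa [Real.norm_eq_abs] using hM y)
    simpa [measure_univ] using hb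
  have hsf : ∀ k, SigmaFinite ((fun k => if c k then ν true k else ν false k) k) := by
    intro k; rcases Bool.dichotomy (c k) with hk | hk <;> simp only [hk] <;>
      simp only [Bool.false_eq_true, if_false, if_true] <;> infer_instance
  have hmp := @measurePreserving_piEquivPiSubtypeProd (Fin K) (fun _ => 𝓧) _ _
    (fun k => if c k then ν true k else ν false k) hsf (fun k => c k = true) _
  have e1 : (Measure.pi fun i : {k // c k = true} =>
      if c i.1 then ν true i.1 else ν false i.1)
      = Measure.pi (fun i : {k // c k = true} => ν true i.1) := by
    congr 1; funext i; rw [if_pos i.2]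
  have e2 : (Measure.pi fun i : {k // ¬(c k = true)} =>
      if c i.1 then ν true i.1 else ν false i.1)
      = Measure.pi (fun i : {k // ¬(c k = true)} => ν false i.1) := by
    congr 1; funext i; rw [if_neg i.2]
  have hint : Integrable (fun z : ({k // c k = true} → 𝓧) × ({k // ¬(c k = true)} → 𝓧) =>
      F (ψ.symm z)) ((Measure.pi fun i : {k // c k = true} => ν true i.1).prod
        (Measure.pi fun i : {k // ¬(c k = true)} => ν false i.1)) := by
    refine (integrable_const M).mono'
      (hFsm.comp_measurable (MeasurableEquiv.measurable ψ.symm)).aestronglyMeasurable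
      (Filter.Eventually.of_forall fun z => hFbd _)
  calc ∫ x, F x ∂(Measure.pi (fun k => if c k then ν true k else ν false k))
      = ∫ z, F (ψ.symm z) ∂(((Measure.pi fun i : {k // c k = true} =>
            if c i.1 then ν true i.1 else ν false i.1)).prod
          ((Measure.pi fun i : {k // ¬(c k = true)} =>
            if c i.1 then ν true i.1 else ν false i.1))) := by
        rw [← hmp.integral_comp (MeasurableEquiv.measurableEmbedding ψ)
          (fun z => F (ψ.symm z))]
        simp only [hψdef, MeasurableEquiv.symm_apply_apply]
    _ = ∫ z, F (ψ.symm z) ∂((Measure.pi fun i : {k // c k = true} => ν true i.1).prod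
          (Measure.pi fun i : {k // ¬(c k = true)} => ν false i.1)) := by rw [e1, e2]
    _ = ∫ u, ∫ w, F (ψ.symm (u, w))
          ∂(Measure.pi fun i : {k // ¬(c k = true)} => ν false i.1)
          ∂(Measure.pi fun i : {k // c k = true} => ν true i.1) := integral_prod _ hint

end DRAux

/-- Doubly-robust simplification under full independence, case
c_{K+1} = 0: if under both samples the explanatory variables are mutually
independent (X-marginal is a product measure), then for the change vector c
(with the Y-mechanism kept at sample 0) the counterfactual parameter
θ^c = ∫ h(y) dP⁰_{Y|X} ∏_{c_k=1} dP¹_{X_k} ∏_{c_k=0} dP⁰_{X_k}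
is identified by a single doubly-robust equation in the sub-vector X_c,
provided g = γ (a version of E_{P⁰}[h(Y)|X_c]) or a = α = dP¹_{X_c}/dP⁰_{X_c}. -/
theorem doubly_robust_independent_case
    {𝓧 : Type*} [MeasurableSpace 𝓧] {K : ℕ}
    (P0 P1 : Measure ((Fin K → 𝓧) × ℝ))
    [IsProbabilityMeasure P0] [IsProbabilityMeasure P1]
    (ν : Bool → Fin K → Measure 𝓧) [∀ t k, IsProbabilityMeasure (ν t k)]
    -- full independence: the X-marginals are product measures
    (hind0 : P0.map Prod.fst = Measure.pi (ν false))
    (hind1 : P1.map Prod.fst = Measure.pi (ν true))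
    (c : Fin K → Bool)
    (h : ℝ → ℝ) (hh : Measurable h) (hbd : ∃ M, ∀ y, |h y| ≤ M)
    -- overlap for the shifted sub-vector X_c
    (hac : P1.map (fun ω : (Fin K → 𝓧) × ℝ => fun i : {k // c k = true} => ω.1 i.1)
        ≪ P0.map (fun ω : (Fin K → 𝓧) × ℝ => fun i : {k // c k = true} => ω.1 i.1))
    (hα : MemLp (fun v : {k // c k = true} → 𝓧 =>
        ((P1.map (fun ω : (Fin K → 𝓧) × ℝ => fun i : {k // c k = true} => ω.1 i.1)).rnDeriv
          (P0.map (fun ω : (Fin K → 𝓧) × ℝ => fun i : {k // c k = true} => ω.1 i.1)) v).toReal)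
      2 (P0.map (fun ω : (Fin K → 𝓧) × ℝ => fun i : {k // c k = true} => ω.1 i.1)))
    (g a : ({k // c k = true} → 𝓧) → ℝ) (hgm : Measurable g) (ham : Measurable a)
    (hg : MemLp g 2 (P0.map (fun ω : (Fin K → 𝓧) × ℝ => fun i : {k // c k = true} => ω.1 i.1)))
    (ha : MemLp a 2 (P0.map (fun ω : (Fin K → 𝓧) × ℝ => fun i : {k // c k = true} => ω.1 i.1)))
    -- double robustness: g is the true regression γ, or a is the true weight α
    (hrob :
      (fun ω : (Fin K → 𝓧) × ℝ => g (fun i : {k // c k = true} => ω.1 i.1)) =ᵐ[P0]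
        P0[(fun ω : (Fin K → 𝓧) × ℝ => h ω.2) |
          MeasurableSpace.comap
            (fun ω : (Fin K → 𝓧) × ℝ => fun i : {k // c k = true} => ω.1 i.1) inferInstance]
      ∨ a =ᵐ[P0.map (fun ω : (Fin K → 𝓧) × ℝ => fun i : {k // c k = true} => ω.1 i.1)]
          fun v =>
            ((P1.map (fun ω : (Fin K → 𝓧) × ℝ => fun i : {k // c k = true} => ω.1 i.1)).rnDeriv
              (P0.map (fun ω : (Fin K → 𝓧) × ℝ => fun i : {k // c k = true} => ω.1 i.1)) v).toReal) :
    (∫ v, g v ∂(P1.map (fun ω : (Fin K → 𝓧) × ℝ => fun i : {k // c k = true} => ω.1 i.1)))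
      + (∫ ω, a (fun i : {k // c k = true} => ω.1 i.1)
            * (h ω.2 - g (fun i : {k // c k = true} => ω.1 i.1)) ∂P0)
    = ∫ x, (∫ y, h y ∂(P0.condKernel x))
        ∂(Measure.pi (fun k => if c k then ν true k else ν false k)) := by
  obtain ⟨M, hM⟩ := hbd
  -- notation
  set ψ := MeasurableEquiv.piEquivPiSubtypeProd (fun _ : Fin K => 𝓧) (fun k => c k = true)
    with hψdef
  set κ0 := Measure.pi (fun i : {k // ¬(c k = true)} => ν false i.1) with hκ0def
  set G : ({k // c k = true} → 𝓧) → ℝ := fun u => ∫ w, (∫ y, h y ∂(P0.condKernel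
      (ψ.symm (u, w)))) ∂κ0 with hGdef
  set μ0 := P0.map (fun ω : (Fin K → 𝓧) × ℝ => fun i : {k // c k = true} => ω.1 i.1) with hμ0def
  set μ1 := P1.map (fun ω : (Fin K → 𝓧) × ℝ => fun i : {k // c k = true} => ω.1 i.1) with hμ1def
  have hΦ : Measurable (fun ω : (Fin K → 𝓧) × ℝ => fun i : {k // c k = true} => ω.1 i.1) :=
    (dr_proj_meas c).comp measurable_fst
  haveI : IsProbabilityMeasure μ0 := Measure.isProbabilityMeasure_map hΦ.aemeasurable
  haveI : IsProbabilityMeasure μ1 := Measure.isProbabilityMeasure_map hΦ.aemeasurable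
  have hFsm : StronglyMeasurable (fun x : Fin K → 𝓧 => ∫ y, h y ∂(P0.condKernel x)) :=
    ((hh.comp measurable_snd).stronglyMeasurable).integral_kernel_prod_right'
  have hFbd : ∀ x : Fin K → 𝓧, ‖∫ y, h y ∂(P0.condKernel x)‖ ≤ M := fun x => by
    have hb := norm_integral_le_of_norm_le_const (μ := P0.condKernel x) (f := h)
      (C := M) (Filter.Eventually.of_forall fun y => by simpa [Real.norm_eq_abs] using hM y)
    simpa [measure_univ] using hb
  have hGsm : StronglyMeasurable G :=
    (hFsm.comp_measurable (MeasurableEquiv.measurable ψ.symm)).integral_prod_right'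
  have hGbd : ∀ u, ‖G u‖ ≤ M := fun u => by
    have hb := norm_integral_le_of_norm_le_const (μ := κ0)
      (f := fun w => ∫ y, h y ∂(P0.condKernel (ψ.symm (u, w)))) (C := M)
      (Filter.Eventually.of_forall fun w => hFbd _)
    simpa [measure_univ] using hb
  have hGint : ∀ (μ : Measure ({k // c k = true} → 𝓧)) [IsProbabilityMeasure μ],
      Integrable G μ := fun μ _ =>
    (integrable_const M).mono' hGsm.aestronglyMeasurable
      (Filter.Eventually.of_forall fun u => hGbd u)
  -- θ = ∫ G dμ1
  have hθ : (∫ x, (∫ y, h y ∂(P0.condKernel x))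
        ∂(Measure.pi (fun k => if c k then ν true k else ν false k)))
      = ∫ u, G u ∂μ1 := by
    rw [dr_theta P0 ν c h hh M hM, hμ1def, dr_marginal P1 (ν true) hind1 c]
  -- key identity for a
  have keyA : ∫ ω, a (fun i : {k // c k = true} => ω.1 i.1) * h ω.2 ∂P0
      = ∫ u, a u * G u ∂μ0 :=
    dr_key P0 (ν false) hind0 c h hh M hM a ham (ha.integrable one_le_two)
  -- integrabilities
  have haΦ : Integrable (fun ω : (Fin K → 𝓧) × ℝ =>
      a (fun i : {k // c k = true} => ω.1 i.1)) P0 :=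
    (integrable_map_measure ham.aestronglyMeasurable hΦ.aemeasurable).mp
      (ha.integrable one_le_two)
  have i1 : Integrable (fun ω : (Fin K → 𝓧) × ℝ =>
      a (fun i : {k // c k = true} => ω.1 i.1) * h ω.2) P0 := by
    refine (haΦ.norm.mul_const M).mono'
      ((ham.comp hΦ).mul (hh.comp measurable_snd)).aestronglyMeasurable
      (Filter.Eventually.of_forall fun ω => ?_)
    rw [norm_mul]
    exact mul_le_mul_of_nonneg_left (by simpa [Real.norm_eq_abs] using hM ω.2) (norm_nonneg _)
  have h_ag : Integrable (fun u => a u * g u) μ0 := by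
    haveI : ENNReal.HolderTriple 2 2 1 := ⟨by simp [ENNReal.inv_two_add_inv_two]⟩
    have := (hg.smul (p := 2) (q := 2) (r := 1) ha).integrable le_rfl
    exact this
  have i2 : Integrable (fun ω : (Fin K → 𝓧) × ℝ =>
      a (fun i : {k // c k = true} => ω.1 i.1)
        * g (fun i : {k // c k = true} => ω.1 i.1)) P0 :=
    (integrable_map_measure (ham.mul hgm).aestronglyMeasurable hΦ.aemeasurable).mp h_ag
  have hmap_ag : ∫ ω, a (fun i : {k // c k = true} => ω.1 i.1)
        * g (fun i : {k // c k = true} => ω.1 i.1) ∂P0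
      = ∫ u, a u * g u ∂μ0 :=
    (integral_map hΦ.aemeasurable (ham.mul hgm).aestronglyMeasurable).symm
  have hterm2 : ∫ ω, a (fun i : {k // c k = true} => ω.1 i.1)
        * (h ω.2 - g (fun i : {k // c k = true} => ω.1 i.1)) ∂P0
      = (∫ u, a u * G u ∂μ0) - ∫ u, a u * g u ∂μ0 := by
    simp_rw [mul_sub]
    rw [integral_sub i1 i2, keyA, hmap_ag]
  rw [hθ, hterm2]
  rcases hrob with hgc | haα
  · -- g is the true regression
    have hhint : Integrable (fun ω : (Fin K → 𝓧) × ℝ => h ω.2) P0 :=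
      (integrable_const M).mono' (hh.comp measurable_snd).aestronglyMeasurable
        (Filter.Eventually.of_forall fun ω => by simpa [Real.norm_eq_abs] using hM ω.2)
    have hm : MeasurableSpace.comap
        (fun ω : (Fin K → 𝓧) × ℝ => fun i : {k // c k = true} => ω.1 i.1) inferInstance
        ≤ (inferInstance : MeasurableSpace ((Fin K → 𝓧) × ℝ)) := hΦ.comap_le
    have hgG : g =ᵐ[μ0] G := by
      refine Integrable.ae_eq_of_forall_setIntegral_eq g G (hg.integrable one_le_two)
        (hGint μ0) fun A hA _ => ?_
      have s1 : ∫ u in A, g u ∂μ0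
          = ∫ ω in (fun ω : (Fin K → 𝓧) × ℝ =>
              fun i : {k // c k = true} => ω.1 i.1) ⁻¹' A,
            g (fun i : {k // c k = true} => ω.1 i.1) ∂P0 := by
        rw [hμ0def, setIntegral_map hA hgm.aestronglyMeasurable hΦ.aemeasurable]
      have s2 : ∫ ω in (fun ω : (Fin K → 𝓧) × ℝ =>
              fun i : {k // c k = true} => ω.1 i.1) ⁻¹' A,
            g (fun i : {k // c k = true} => ω.1 i.1) ∂P0
          = ∫ ω in (fun ω : (Fin K → 𝓧) × ℝ =>
              fun i : {k // c k = true} => ω.1 i.1) ⁻¹' A,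
            (P0[(fun ω : (Fin K → 𝓧) × ℝ => h ω.2) |
              MeasurableSpace.comap (fun ω : (Fin K → 𝓧) × ℝ =>
                fun i : {k // c k = true} => ω.1 i.1) inferInstance]) ω ∂P0 :=
        integral_congr_ae (ae_restrict_of_ae hgc)
      have s3 := setIntegral_condExp hm hhint
        (⟨A, hA, rfl⟩ : MeasurableSet[MeasurableSpace.comap (fun ω : (Fin K → 𝓧) × ℝ =>
          fun i : {k // c k = true} => ω.1 i.1) inferInstance]
          ((fun ω : (Fin K → 𝓧) × ℝ => fun i : {k // c k = true} => ω.1 i.1) ⁻¹' A))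
      have s4 : ∫ ω in (fun ω : (Fin K → 𝓧) × ℝ =>
              fun i : {k // c k = true} => ω.1 i.1) ⁻¹' A, h ω.2 ∂P0
          = ∫ ω, (A.indicator (fun _ => (1:ℝ))
              (fun i : {k // c k = true} => ω.1 i.1)) * h ω.2 ∂P0 := by
        rw [← integral_indicator (hΦ hA)]
        refine integral_congr_ae (Filter.Eventually.of_forall fun ω => ?_)
        by_cases hω : (fun i : {k // c k = true} => ω.1 i.1) ∈ A
        · simp [Set.indicator_of_mem, hω]
        · simp [Set.indicator_of_notMem, hω]
      have s5 := dr_key P0 (ν false) hind0 c h hh M hM (A.indicator fun _ => (1:ℝ))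
        (measurable_const.indicator hA) ((integrable_const (1:ℝ)).indicator hA)
      have s6 : ∫ u, (A.indicator (fun _ => (1:ℝ)) u) * G u ∂μ0 = ∫ u in A, G u ∂μ0 := by
        rw [← integral_indicator hA]
        refine integral_congr_ae (Filter.Eventually.of_forall fun u => ?_)
        by_cases hu : u ∈ A
        · simp [Set.indicator_of_mem, hu]
        · simp [Set.indicator_of_notMem, hu]
      rw [s1, s2, s3, s4, s5, ← s6]
    have e1 : ∫ v, g v ∂μ1 = ∫ v, G v ∂μ1 := integral_congr_ae (hac.ae_eq hgG)
    have e2 : ∫ u, a u * g u ∂μ0 = ∫ u, a u * G u ∂μ0 :=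
      integral_congr_ae (hgG.mono fun u hu => by dsimp only; rw [hu])
    rw [e1, e2]; ring
  · -- a is the true weight
    have e1 : ∫ v, g v ∂μ1 = ∫ u, a u * g u ∂μ0 := by
      rw [← integral_rnDeriv_smul hac (f := g)]
      refine integral_congr_ae ?_
      filter_upwards [haα] with u hu
      rw [hu, smul_eq_mul]
    have e2 : ∫ v, G v ∂μ1 = ∫ u, a u * G u ∂μ0 := by
      rw [← integral_rnDeriv_smul hac (f := G)]
      refine integral_congr_ae ?_
      filter_upwards [haα] with u hu
      rw [hu, smul_eq_mul]
    rw [e1, e2]; ring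
end
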